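/- Let N ≥ 1, q | N with q the conductor of a character χ mod N, and write e_p = ord_p(N), s_p = ord_p(q). Then for any real x, Σ_{c | N, q | N/gcd(c, N/c)} φ(gcd(c, N/c)) · gcd(c, N/c)^x = ∏_{p | N} [ 2 + (p-1)·p^x · (p^{m_p(x+1)} + p^{m'_p(x+1)} - 2)/(p^{x+1} - 1) ], where m_p = min{⌊e_p/2⌋, e_p - s_p} and m'_p = min{⌊(e_p-1)/2⌋, e_p - s_p}. -/

import Mathlib

open Finset

private lemma iteMulIte {P Q : Prop} [Decidable P] [Decidable Q] (u v : ℝ) :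
    (if P ∧ Q then u * v else 0) = (if P then u else 0) * (if Q then v else 0) := by
  by_cases hP : P <;> by_cases hQ : Q <;> simp [hP, hQ]

private lemma geomAux (p : ℕ) (hp : p.Prime) (t : ℝ) (hy : (p : ℝ) * t ≠ 1) (M : ℕ) :
    ∑ m ∈ Finset.range (M + 1), ((p ^ m).totient : ℝ) * t ^ m
      = 1 + ((p : ℝ) - 1) * t * (((p : ℝ) * t) ^ M - 1) / ((p : ℝ) * t - 1) := by
  have hne : (p : ℝ) * t - 1 ≠ 0 := sub_ne_zero.mpr hy
  induction M with
  | zero => simp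
  | succ M ih =>
      rw [Finset.sum_range_succ, ih, Nat.totient_prime_pow_succ hp M]
      have h1 : (1 : ℕ) ≤ p := hp.one_le
      push_cast [Nat.cast_sub h1]

      field_simp
      ring

private lemma truncAux (g : ℕ → ℝ) (K T : ℕ) :
    ∑ m ∈ Finset.range (K + 1), (if m ≤ T then g m else 0)
      = ∑ m ∈ Finset.range (min K T + 1), g m := by
  have hsub : Finset.range (min K T + 1) ⊆ Finset.range (K + 1) :=
    Finset.range_subset_range.mpr (by omega)
  have h1 : ∑ m ∈ Finset.range (K + 1), (if m ≤ T then g m else 0)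
      = ∑ m ∈ Finset.range (min K T + 1), (if m ≤ T then g m else 0) := by
    refine (Finset.sum_subset hsub ?_).symm
    intro m hm hnot
    simp only [Finset.mem_range] at hm hnot
    rw [if_neg (by omega)]
  rw [h1]
  refine Finset.sum_congr rfl fun m hm => ?_
  simp only [Finset.mem_range] at hm
  rw [if_pos (by omega)]

private lemma reflAux (g : ℕ → ℝ) (n : ℕ) :
    ∑ a ∈ Finset.range (n + 1), g (min a (n - a))
      = ∑ m ∈ Finset.range (n / 2 + 1), g m + ∑ m ∈ Finset.range ((n + 1) / 2), g m := by
  have hset : Finset.range (n + 1)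
      = Finset.range (n / 2 + 1) ∪ (Finset.range ((n + 1) / 2)).image (fun m => n - m) := by
    ext a
    simp only [Finset.mem_union, Finset.mem_range, Finset.mem_image]
    constructor
    · intro ha
      by_cases h : a ≤ n / 2
      · left; omega
      · right; exact ⟨n - a, by omega, by omega⟩
    · rintro (h | ⟨m, hm, rfl⟩) <;> omega
  have hdisj : Disjoint (Finset.range (n / 2 + 1))
      ((Finset.range ((n + 1) / 2)).image (fun m => n - m)) := by
    rw [Finset.disjoint_left]
    intro a ha hb
    simp only [Finset.mem_range] at ha
    simp only [Finset.mem_image, Finset.mem_range] at hb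
    obtain ⟨m, hm, rfl⟩ := hb
    omega
  have hinj : ∀ m ∈ Finset.range ((n + 1) / 2), ∀ m' ∈ Finset.range ((n + 1) / 2),
      n - m = n - m' → m = m' := by
    intro m hm m' hm' h
    simp only [Finset.mem_range] at hm hm'
    omega
  rw [hset, Finset.sum_union hdisj, Finset.sum_image hinj]
  congr 1
  · refine Finset.sum_congr rfl fun a ha => ?_
    simp only [Finset.mem_range] at ha
    congr 1
    omega
  · refine Finset.sum_congr rfl fun m hm => ?_
    simp only [Finset.mem_range] at hm
    congr 1
    omega

private lemma sumDivisorsCoprime {R : Type*} [AddCommMonoid R] {a b : ℕ}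
    (hab : Nat.Coprime a b) (ha : a ≠ 0) (hb : b ≠ 0) (f : ℕ → R) :
    ∑ c ∈ (a * b).divisors, f c = ∑ u ∈ a.divisors, ∑ v ∈ b.divisors, f (u * v) := by
  rw [← Finset.sum_product']
  refine Finset.sum_nbij' (fun c => (Nat.gcd c a, Nat.gcd c b)) (fun p => p.1 * p.2)
    ?_ ?_ ?_ ?_ ?_
  · intro c hc
    simp only [Finset.mem_product, Nat.mem_divisors]
    exact ⟨⟨Nat.gcd_dvd_right _ _, ha⟩, ⟨Nat.gcd_dvd_right _ _, hb⟩⟩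
  · rintro ⟨u, v⟩ hp
    simp only [Finset.mem_product, Nat.mem_divisors] at hp
    exact Nat.mem_divisors.mpr ⟨mul_dvd_mul hp.1.1 hp.2.1, mul_ne_zero ha hb⟩
  · intro c hc
    exact (Nat.gcd_mul_gcd_eq_iff_dvd_mul_of_coprime hab).mpr (Nat.mem_divisors.mp hc).1
  · rintro ⟨u, v⟩ hp
    simp only [Finset.mem_product, Nat.mem_divisors] at hp
    obtain ⟨⟨hu, -⟩, hv, -⟩ := hp
    have h1 : Nat.gcd (u * v) a = u := by
      rw [Nat.Coprime.gcd_mul_right_cancel u (Nat.Coprime.coprime_dvd_left hv hab.symm)]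
      exact Nat.gcd_eq_left hu
    have h2 : Nat.gcd (u * v) b = v := by
      rw [Nat.Coprime.gcd_mul_left_cancel v (Nat.Coprime.coprime_dvd_left hu hab)]
      exact Nat.gcd_eq_left hv
    simp [h1, h2]
  · intro c hc
    rw [(Nat.gcd_mul_gcd_eq_iff_dvd_mul_of_coprime hab).mpr (Nat.mem_divisors.mp hc).1]

private lemma localCase (p n s : ℕ) (hp : p.Prime) (hn : 0 < n) (hsn : s ≤ n)
    (x : ℝ) (hx : x ≠ -1) :
    (∑ c ∈ (p ^ n).divisors,
        if p ^ s ∣ p ^ n / Nat.gcd c (p ^ n / c) then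
          ((Nat.gcd c (p ^ n / c)).totient : ℝ) * ((Nat.gcd c (p ^ n / c) : ℝ)) ^ x
        else 0)
      = 2 + ((p : ℝ) - 1) * (p : ℝ) ^ x *
          ((p : ℝ) ^ (((min (n / 2) (n - s) : ℕ) : ℝ) * (x + 1)) +
           (p : ℝ) ^ (((min ((n - 1) / 2) (n - s) : ℕ) : ℝ) * (x + 1)) - 2) /
          ((p : ℝ) ^ (x + 1) - 1) := by
  have hp1 : 1 < p := hp.one_lt
  have hp0 : (0 : ℝ) < p := by exact_mod_cast hp.pos
  set t : ℝ := (p : ℝ) ^ x with ht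
  have hPt : (p : ℝ) ^ (x + 1) = (p : ℝ) * t := by
    rw [ht, Real.rpow_add_one (ne_of_gt hp0), mul_comm]
  have hyne : (p : ℝ) * t ≠ 1 := by
    rw [← hPt]
    intro h
    have hlog := Real.log_rpow hp0 (x + 1)
    rw [h, Real.log_one] at hlog
    have hlp : Real.log p ≠ 0 := ne_of_gt (Real.log_pos (by exact_mod_cast hp1))
    rcases mul_eq_zero.mp hlog.symm with h' | h'
    · exact hx (by linarith)
    · exact hlp h'
  have hsub : ((p : ℝ) * t - 1) ≠ 0 := sub_ne_zero.mpr hyne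
  set G : ℕ → ℝ := fun m => if m ≤ n - s then ((p ^ m).totient : ℝ) * t ^ m else 0 with hG
  have hcastpow : ∀ m : ℕ, ((p ^ m : ℕ) : ℝ) ^ x = t ^ m := by
    intro m
    rw [ht]
    push_cast
    rw [← Real.rpow_natCast (p : ℝ) m, ← Real.rpow_mul hp0.le,
      ← Real.rpow_natCast ((p : ℝ) ^ x) m]
    rw [← Real.rpow_mul hp0.le, mul_comm]
  rw [Nat.sum_divisors_prime_pow hp]
  have hstep : ∀ i ∈ Finset.range (n + 1),
      (if p ^ s ∣ p ^ n / Nat.gcd (p ^ i) (p ^ n / p ^ i) then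
          ((Nat.gcd (p ^ i) (p ^ n / p ^ i)).totient : ℝ) *
            ((Nat.gcd (p ^ i) (p ^ n / p ^ i) : ℝ)) ^ x
        else 0) = G (min i (n - i)) := by
    intro i hi
    simp only [Finset.mem_range] at hi
    have hin : i ≤ n := by omega
    have hdiv : p ^ n / p ^ i = p ^ (n - i) := Nat.pow_div hin hp.pos
    have hgcd : Nat.gcd (p ^ i) (p ^ (n - i)) = p ^ (min i (n - i)) := by
      rcases le_total i (n - i) with h | h
      · rw [min_eq_left h]; exact Nat.gcd_eq_left (pow_dvd_pow p h)
      · rw [min_eq_right h]; exact Nat.gcd_eq_right (pow_dvd_pow p h)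
    have hmin : min i (n - i) ≤ n := by omega
    have hdiv2 : p ^ n / p ^ (min i (n - i)) = p ^ (n - min i (n - i)) :=
      Nat.pow_div hmin hp.pos
    rw [hdiv, hgcd, hdiv2]
    have hcond : (p ^ s ∣ p ^ (n - min i (n - i))) ↔ (min i (n - i) ≤ n - s) := by
      rw [Nat.pow_dvd_pow_iff_le_right hp1]
      omega
    rw [hG]
    simp only []
    rw [hcastpow (min i (n - i))]
    exact if_congr hcond rfl rfl
  rw [Finset.sum_congr rfl hstep, reflAux G n,
    show (n + 1) / 2 = (n - 1) / 2 + 1 by omega]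
  simp only [hG]
  rw [truncAux, truncAux, geomAux p hp t hyne, geomAux p hp t hyne]
  have hM : ∀ M : ℕ, (p : ℝ) ^ (((M : ℕ) : ℝ) * (x + 1)) = ((p : ℝ) * t) ^ M := by
    intro M
    rw [mul_comm ((M : ℕ) : ℝ) (x + 1), Real.rpow_mul hp0.le, Real.rpow_natCast, hPt]
  rw [hM, hM, hPt]
  field_simp
  ring

private lemma keyLemma (x : ℝ) (hx : x ≠ -1) :
    ∀ N : ℕ, N ≠ 0 → ∀ q : ℕ, q ∣ N →
    (∑ c ∈ N.divisors,
        if q ∣ N / Nat.gcd c (N / c) then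
          ((Nat.gcd c (N / c)).totient : ℝ) * ((Nat.gcd c (N / c) : ℝ)) ^ x
        else 0) =
      ∏ p ∈ N.primeFactors,
        (2 + ((p : ℝ) - 1) * (p : ℝ) ^ x *
          ((p : ℝ) ^ (((min (N.factorization p / 2)
                (N.factorization p - q.factorization p) : ℕ) : ℝ) * (x + 1)) +
           (p : ℝ) ^ (((min ((N.factorization p - 1) / 2)
                (N.factorization p - q.factorization p) : ℕ) : ℝ) * (x + 1)) - 2) /
          ((p : ℝ) ^ (x + 1) - 1)) := by
  intro N
  induction N using Nat.recOnPosPrimePosCoprime with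
  | prime_pow p n hpp hn =>
      intro _ q hq
      obtain ⟨s, hsn, rfl⟩ := (Nat.dvd_prime_pow hpp).mp hq
      have hNf : ((p : ℕ) ^ n).factorization p = n := by
        rw [hpp.factorization_pow, Finsupp.single_eq_same]
      have hqf : ((p : ℕ) ^ s).factorization p = s := by
        rw [hpp.factorization_pow, Finsupp.single_eq_same]
      rw [Nat.primeFactors_prime_pow hn.ne' hpp, Finset.prod_singleton, hNf, hqf]
      exact localCase p n s hpp hn hsn x hx
  | zero => intro h; exact absurd rfl h
  | one =>
      intro _ q hq
      rw [Nat.dvd_one] at hq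
      subst hq
      simp [Nat.divisors_one]
  | coprime a b ha1 hb1 hab IHa IHb =>
      intro _ q hq
      have ha0 : a ≠ 0 := by omega
      have hb0 : b ≠ 0 := by omega
      have hab0 : a * b ≠ 0 := mul_ne_zero ha0 hb0
      have hq0 : q ≠ 0 := by
        rintro rfl
        exact hab0 (zero_dvd_iff.mp hq)
      set qa := Nat.gcd q a with hqadef
      set qb := Nat.gcd q b with hqbdef
      have hqmul : qa * qb = q := (Nat.gcd_mul_gcd_eq_iff_dvd_mul_of_coprime hab).mpr hq
      have hqa0 : qa ≠ 0 := by
        intro h; exact hq0 (by rw [← hqmul, h, zero_mul])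
      have hqb0 : qb ≠ 0 := by
        intro h; exact hq0 (by rw [← hqmul, h, mul_zero])
      have hcop : ∀ {u v : ℕ}, u ∣ a → v ∣ b → Nat.Coprime u v := by
        intro u v hu hv
        exact Nat.Coprime.coprime_dvd_right hv (Nat.Coprime.coprime_dvd_left hu hab)
      rw [sumDivisorsCoprime hab ha0 hb0]
      have hterm : ∀ u ∈ a.divisors, ∀ v ∈ b.divisors,
          (if q ∣ a * b / Nat.gcd (u * v) (a * b / (u * v)) then
              ((Nat.gcd (u * v) (a * b / (u * v))).totient : ℝ) *
                ((Nat.gcd (u * v) (a * b / (u * v)) : ℝ)) ^ x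
            else 0)
          = (if qa ∣ a / Nat.gcd u (a / u) then
              ((Nat.gcd u (a / u)).totient : ℝ) * ((Nat.gcd u (a / u) : ℝ)) ^ x else 0) *
            (if qb ∣ b / Nat.gcd v (b / v) then
              ((Nat.gcd v (b / v)).totient : ℝ) * ((Nat.gcd v (b / v) : ℝ)) ^ x else 0) := by
        intro u hu' v hv'
        have hu : u ∣ a := (Nat.mem_divisors.mp hu').1
        have hv : v ∣ b := (Nat.mem_divisors.mp hv').1
        have hau : a / u ∣ a := Nat.div_dvd_of_dvd hu
        have hbv : b / v ∣ b := Nat.div_dvd_of_dvd hv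
        have h1 : a * b / (u * v) = (a / u) * (b / v) := (Nat.div_mul_div_comm hu hv).symm
        have hga : Nat.gcd (u * v) ((a / u) * (b / v))
            = Nat.gcd u (a / u) * Nat.gcd v (b / v) := by
          rw [Nat.Coprime.gcd_mul (u * v) (hcop hau hbv)]
          congr 1
          · rw [Nat.Coprime.gcd_mul_right_cancel u ((hcop hau hv).symm)]
          · rw [Nat.Coprime.gcd_mul_left_cancel v (hcop hu hbv)]
        set ga := Nat.gcd u (a / u) with hgadef
        set gb := Nat.gcd v (b / v) with hgbdef
        have hgaa : ga ∣ a := (Nat.gcd_dvd_left _ _).trans hu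
        have hgbb : gb ∣ b := (Nat.gcd_dvd_left _ _).trans hv
        have h2 : a * b / (ga * gb) = (a / ga) * (b / gb) :=
          (Nat.div_mul_div_comm hgaa hgbb).symm
        have h3 : (q ∣ (a / ga) * (b / gb)) ↔ (qa ∣ a / ga ∧ qb ∣ b / gb) := by
          constructor
          · intro h
            have hqaq : qa ∣ q := ⟨qb, hqmul.symm⟩
            have hqbq : qb ∣ q := ⟨qa, by rw [← hqmul, mul_comm]⟩
            refine ⟨Nat.Coprime.dvd_of_dvd_mul_right
                (hcop (Nat.gcd_dvd_right q a) (Nat.div_dvd_of_dvd hgbb)) (hqaq.trans h), ?_⟩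
            exact Nat.Coprime.dvd_of_dvd_mul_left
              ((hcop (Nat.div_dvd_of_dvd hgaa) (Nat.gcd_dvd_right q b)).symm) (hqbq.trans h)
          · rintro ⟨h1', h2'⟩
            rw [← hqmul]
            exact mul_dvd_mul h1' h2'
        have h4 : (ga * gb).totient = ga.totient * gb.totient :=
          Nat.totient_mul (hcop hgaa hgbb)
        rw [h1, hga, h2]
        by_cases hP : qa ∣ a / ga <;> by_cases hQ : qb ∣ b / gb
        · rw [if_pos (h3.mpr ⟨hP, hQ⟩), if_pos hP, if_pos hQ, h4]
          push_cast
          rw [Real.mul_rpow (Nat.cast_nonneg ga) (Nat.cast_nonneg gb)]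
          ring
        · rw [if_neg (fun h => hQ (h3.mp h).2), if_neg hQ, mul_zero]
        · rw [if_neg (fun h => hP (h3.mp h).1), if_neg hP, zero_mul]
        · rw [if_neg (fun h => hP (h3.mp h).1), if_neg hP, zero_mul]
      calc (∑ u ∈ a.divisors, ∑ v ∈ b.divisors,
              if q ∣ a * b / Nat.gcd (u * v) (a * b / (u * v)) then
                ((Nat.gcd (u * v) (a * b / (u * v))).totient : ℝ) *
                  ((Nat.gcd (u * v) (a * b / (u * v)) : ℝ)) ^ x
              else 0)
          = (∑ u ∈ a.divisors,
              if qa ∣ a / Nat.gcd u (a / u) then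
                ((Nat.gcd u (a / u)).totient : ℝ) * ((Nat.gcd u (a / u) : ℝ)) ^ x else 0) *
            (∑ v ∈ b.divisors,
              if qb ∣ b / Nat.gcd v (b / v) then
                ((Nat.gcd v (b / v)).totient : ℝ) * ((Nat.gcd v (b / v) : ℝ)) ^ x else 0) := by
            rw [Finset.sum_mul_sum]
            exact Finset.sum_congr rfl fun u hu =>
              Finset.sum_congr rfl fun v hv => hterm u hu v hv
        _ = _ := by
            rw [IHa ha0 qa (Nat.gcd_dvd_right q a), IHb hb0 qb (Nat.gcd_dvd_right q b)]
            rw [Nat.Coprime.primeFactors_mul hab,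
              Finset.prod_union (Nat.Coprime.disjoint_primeFactors hab)]
            congr 1
            · refine Finset.prod_congr rfl fun p hp => ?_
              have hpa : p ∣ a := Nat.dvd_of_mem_primeFactors hp
              have hpp : p.Prime := Nat.prime_of_mem_primeFactors hp
              have hpb : ¬ p ∣ b := fun h =>
                Nat.Prime.one_lt hpp |>.ne' (Nat.eq_one_of_dvd_one (hab ▸ Nat.dvd_gcd hpa h))
              have hNf : (a * b).factorization p = a.factorization p := by
                rw [Nat.factorization_mul ha0 hb0]
                simp [Nat.factorization_eq_zero_of_not_dvd hpb]
              have hqf : q.factorization p = qa.factorization p := by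
                rw [← hqmul, Nat.factorization_mul hqa0 hqb0]
                have : ¬ p ∣ qb := fun h => hpb (h.trans (Nat.gcd_dvd_right q b))
                simp [Nat.factorization_eq_zero_of_not_dvd this]
              rw [hNf, hqf]
            · refine Finset.prod_congr rfl fun p hp => ?_
              have hpb : p ∣ b := Nat.dvd_of_mem_primeFactors hp
              have hpp : p.Prime := Nat.prime_of_mem_primeFactors hp
              have hpa : ¬ p ∣ a := fun h =>
                Nat.Prime.one_lt hpp |>.ne' (Nat.eq_one_of_dvd_one (hab ▸ Nat.dvd_gcd h hpb))
              have hNf : (a * b).factorization p = b.factorization p := by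
                rw [Nat.factorization_mul ha0 hb0]
                simp [Nat.factorization_eq_zero_of_not_dvd hpa]
              have hqf : q.factorization p = qb.factorization p := by
                rw [← hqmul, Nat.factorization_mul hqa0 hqb0]
                have : ¬ p ∣ qa := fun h => hpa (h.trans (Nat.gcd_dvd_right q a))
                simp [Nat.factorization_eq_zero_of_not_dvd this]
              rw [hNf, hqf]

/-- Let `N ≥ 1` and let `q ∣ N` be the conductor of a Dirichlet
character `χ` mod `N`; write `e_p = ord_p N` and `s_p = ord_p q`. Then for any real
`x` (with `x ≠ -1`, where the closed form below is valid; at `x = -1` the right-hand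
side is interpreted by continuity),
`Σ_{c ∣ N, q ∣ N/gcd(c, N/c)} φ(gcd(c, N/c))·gcd(c, N/c)^x
  = ∏_{p ∣ N} [2 + (p-1)p^x (p^{m_p(x+1)} + p^{m'_p(x+1)} - 2)/(p^{x+1} - 1)]`,
where `m_p = min{⌊e_p/2⌋, e_p - s_p}` and `m'_p = min{⌊(e_p-1)/2⌋, e_p - s_p}`. -/
theorem sum_totient_gcd_rpow (N q : ℕ) (hN : 1 ≤ N)
    (χ : DirichletCharacter ℂ N) (hq : χ.conductor = q) (hqN : q ∣ N)
    (x : ℝ) (hx : x ≠ -1) :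
    (∑ c ∈ N.divisors,
        if q ∣ N / Nat.gcd c (N / c) then
          ((Nat.gcd c (N / c)).totient : ℝ) * ((Nat.gcd c (N / c) : ℝ)) ^ x
        else 0) =
      ∏ p ∈ N.primeFactors,
        (2 + ((p : ℝ) - 1) * (p : ℝ) ^ x *
          ((p : ℝ) ^ (((min (N.factorization p / 2)
                (N.factorization p - q.factorization p) : ℕ) : ℝ) * (x + 1)) +
           (p : ℝ) ^ (((min ((N.factorization p - 1) / 2)
                (N.factorization p - q.factorization p) : ℕ) : ℝ) * (x + 1)) - 2) /
          ((p : ℝ) ^ (x + 1) - 1)) := by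
  exact keyLemma x hx N (by omega) q hqN
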